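/- Let f : ℝⁿ → ℝ be convex and differentiable, let g : ℝⁿ → ℝ be convex, set F := f + g, let x* be a global minimizer of F, set ξ(x) := F(x) − F(x*), and let L > 0. Then for every x ∈ ℝⁿ with x ≠ x*, there exists y ∈ ℝⁿ such that ⟨∇f(x), y⟩ + (L/2)‖y‖² + g(x + y) − g(x) ≤ − min { ξ(x)/2 , ξ(x)² / (2L‖x − x*‖²) }. (Equivalently, the proximal forcing function satisfies μ(x) ≥ ξ(x)·min{ L/(2ξ(x)), 1/(2‖x − x*‖²) }, so F is weakly PL.) -/

import Mathlib

open scoped RealInnerProductSpace BigOperators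

lemma grad_ineq_aux {n : ℕ} (f : EuclideanSpace ℝ (Fin n) → ℝ)
    (hdiff : Differentiable ℝ f) (hconv : ConvexOn ℝ Set.univ f)
    (x z : EuclideanSpace ℝ (Fin n)) :
    ⟪gradient f x, z - x⟫ ≤ f z - f x := by
  set D : ℝ := ⟪gradient f x, z - x⟫ with hD
  have hgrad : HasGradientAt f (gradient f x) x := (hdiff x).hasGradientAt
  have hfd : HasFDerivAt f ((InnerProductSpace.toDual ℝ _) (gradient f x)) x :=
    hasGradientAt_iff_hasFDerivAt.mp hgrad
  have hc : HasDerivAt (fun t : ℝ => x + t • (z - x)) (z - x) 0 := by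
    simpa using ((hasDerivAt_id (0:ℝ)).smul_const (z - x)).const_add x
  have hφ : HasDerivAt (fun t : ℝ => f (x + t • (z - x))) D 0 := by
    have hx0 : x + (0:ℝ) • (z - x) = x := by simp
    rw [← hx0] at hfd
    have : HasDerivAt (fun t : ℝ => f (x + t • (z - x)))
        ((InnerProductSpace.toDual ℝ _) (gradient f (x + (0:ℝ) • (z - x))) (z - x)) 0 := hfd.comp_hasDerivAt 0 hc
    simpa [hD, InnerProductSpace.toDual_apply_apply] using this
  have hslope : Filter.Tendsto (slope (fun t : ℝ => f (x + t • (z - x))) 0)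
      (nhdsWithin 0 {(0:ℝ)}ᶜ) (nhds D) := hasDerivAt_iff_tendsto_slope.mp hφ
  have hsub : Set.Ioi (0:ℝ) ⊆ {(0:ℝ)}ᶜ := fun t ht => ne_of_gt ht
  have hslope' := hslope.mono_left (nhdsWithin_mono 0 hsub)
  refine le_of_tendsto hslope' ?_
  filter_upwards [Ioo_mem_nhdsGT_of_mem (by norm_num : (0:ℝ) ∈ Set.Ico 0 1)] with t ht
  have ht0 : 0 < t := ht.1
  have ht1 : t < 1 := ht.2
  have key : f (x + t • (z - x)) ≤ (1 - t) * f x + t * f z := by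
    have h := hconv.2 (Set.mem_univ x) (Set.mem_univ z)
      (by linarith : (0:ℝ) ≤ 1 - t) ht0.le (by ring)
    have he : (1 - t) • x + t • z = x + t • (z - x) := by
      simp [smul_sub, sub_smul]; abel
    rwa [he] at h
  have h0 : (fun t : ℝ => f (x + t • (z - x))) 0 = f x := by norm_num
  rw [slope_def_field]
  simp only [zero_smul, add_zero, sub_zero]
  have hkey' : f (x + t • (z - x)) - f x ≤ t * (f z - f x) := by nlinarith [key]
  rw [div_le_iff₀ ht0]
  calc f (x + t • (z - x)) - f x ≤ t * (f z - f x) := hkey'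
    _ = (f z - f x) * t := by ring

theorem convex_is_weakly_PL {n : ℕ} (f g : EuclideanSpace ℝ (Fin n) → ℝ) (L : ℝ) (hL : 0 < L)
    (hdiff : Differentiable ℝ f)
    (hfconv : ConvexOn ℝ Set.univ f) (hgconv : ConvexOn ℝ Set.univ g)
    (xstar : EuclideanSpace ℝ (Fin n)) (hmin : ∀ y, f xstar + g xstar ≤ f y + g y) :
    ∀ x : EuclideanSpace ℝ (Fin n), x ≠ xstar → ∃ y : EuclideanSpace ℝ (Fin n),
      ⟪gradient f x, y⟫ + L / 2 * ‖y‖ ^ 2 + g (x + y) - g x ≤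
        - min ((f x + g x - (f xstar + g xstar)) / 2)
          ((f x + g x - (f xstar + g xstar)) ^ 2 / (2 * L * ‖x - xstar‖ ^ 2)) := by
  intro x hx
  set ξ : ℝ := f x + g x - (f xstar + g xstar) with hξdef
  have hξ : 0 ≤ ξ := by have := hmin x; simp [hξdef]; linarith
  have hdpos : 0 < ‖x - xstar‖ := by
    rw [norm_pos_iff]; exact sub_ne_zero.mpr hx
  set N : ℝ := ‖x - xstar‖ ^ 2 with hN
  have hNpos : 0 < N := by positivity
  set t : ℝ := min 1 (ξ / (L * N)) with htdef
  have ht0 : 0 ≤ t := le_min zero_le_one (by positivity)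
  have ht1 : t ≤ 1 := min_le_left _ _
  refine ⟨t • (xstar - x), ?_⟩
  have hnorm : ‖t • (xstar - x)‖ ^ 2 = t ^ 2 * N := by
    rw [norm_smul, Real.norm_eq_abs, abs_of_nonneg ht0, mul_pow, hN, norm_sub_rev]
  have hA : ⟪gradient f x, t • (xstar - x)⟫ ≤ t * (f xstar - f x) := by
    rw [real_inner_smul_right]
    exact mul_le_mul_of_nonneg_left (grad_ineq_aux f hdiff hfconv x xstar) ht0
  have hC : g (x + t • (xstar - x)) - g x ≤ t * (g xstar - g x) := by
    have h := hgconv.2 (Set.mem_univ x) (Set.mem_univ xstar)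
      (by linarith : (0:ℝ) ≤ 1 - t) ht0 (by ring)
    have he : (1 - t) • x + t • xstar = x + t • (xstar - x) := by
      simp [smul_sub, sub_smul]; abel
    rw [he] at h
    simp only [smul_eq_mul] at h
    nlinarith [h]
  have hmain : ⟪gradient f x, t • (xstar - x)⟫ + L / 2 * ‖t • (xstar - x)‖ ^ 2
      + g (x + t • (xstar - x)) - g x ≤ -t * ξ + L / 2 * t ^ 2 * N := by
    rw [hnorm]
    have : t * (f xstar - f x) + t * (g xstar - g x) = -t * ξ := by
      rw [hξdef]; ring
    nlinarith [hA, hC]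
  refine hmain.trans ?_
  rcases le_or_gt (ξ / (L * N)) 1 with h | h
  · have ht : t = ξ / (L * N) := min_eq_right h
    have hval : -t * ξ + L / 2 * t ^ 2 * N = -(ξ ^ 2 / (2 * L * N)) := by
      rw [ht]; field_simp; ring
    rw [hval]
    have : min (ξ / 2) (ξ ^ 2 / (2 * L * N)) ≤ ξ ^ 2 / (2 * L * N) := min_le_right _ _
    linarith
  · have ht : t = 1 := min_eq_left h.le
    have hLN : L * N < ξ := by
      have := (one_lt_div (by positivity : (0:ℝ) < L * N)).mp h
      linarith
    have hval : -t * ξ + L / 2 * t ^ 2 * N ≤ -(ξ / 2) := by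
      rw [ht]; nlinarith
    refine hval.trans ?_
    have : min (ξ / 2) (ξ ^ 2 / (2 * L * N)) ≤ ξ / 2 := min_le_left _ _
    linarith
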